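/- Let 1 ≤ p ≤ ∞ and α, β ≥ −1/2. Let T_{(α,β)} be the Jacobi operator with domain D = C^∞[−1,1], viewed as an operator on L^p([−1,1], w_{(α,β)}(t) dt), and let T_e be any admissible extension of T_{(α,β)}. Then T_e has the single-valued extension property. -/

import Mathlib

open Filter MeasureTheory
open scoped ENNReal Topology

noncomputable section

/-- The Jacobi measure `w_{(α,β)}(t) dt = (1-t)^α (1+t)^β dt` on `(-1, 1)`. -/
def jacobiMeasure (α β : ℝ) : Measure ℝ :=
  (volume.restrict (Set.Ioo (-1 : ℝ) 1)).withDensity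
    fun t => ENNReal.ofReal ((1 - t) ^ α * (1 + t) ^ β)

/-- `f : ℝ → ℂ` represents an element of `C^∞[-1,1]` (as the restriction to `[-1,1]` of a
smooth function on `ℝ`). -/
def SmoothFn (f : ℝ → ℂ) : Prop := ∀ n : ℕ, ContDiff ℝ n f

/-- The Jacobi operator `T_{(α,β)} = (1-t²) d²/dt² + [β - α - (α+β+2)t] d/dt`. -/
def jacobiOp (α β : ℝ) (f : ℝ → ℂ) : ℝ → ℂ := fun t =>
  ((1 - t ^ 2 : ℝ) : ℂ) * iteratedDeriv 2 f t +
    ((β - α - (α + β + 2) * t : ℝ) : ℂ) * iteratedDeriv 1 f t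

/-- `T_e` is an admissible extension of the Jacobi operator `T_{(α,β)}` (with domain
`C^∞[-1,1]`) on `L^p([-1,1], w_{(α,β)} dt)`: its domain contains all smooth functions, on
which it acts as `T_{(α,β)}`, and `∫ (T_e f) g w = ∫ f (T_{(α,β)} g) w` for all `f` in its
domain and all smooth `g`. -/
def IsAdmissibleJacobiExt (α β : ℝ) (p : ℝ≥0∞) [Fact (1 ≤ p)]
    (Te : Lp ℂ p (jacobiMeasure α β) →ₗ.[ℂ] Lp ℂ p (jacobiMeasure α β)) : Prop :=
  (∀ f : ℝ → ℂ, SmoothFn f → ∀ u : Lp ℂ p (jacobiMeasure α β),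
    ⇑u =ᵐ[jacobiMeasure α β] f →
      ∃ hu : u ∈ Te.domain, ⇑(Te ⟨u, hu⟩) =ᵐ[jacobiMeasure α β] jacobiOp α β f) ∧
  (∀ u : Te.domain, ∀ g : ℝ → ℂ, SmoothFn g →
    ∫ t, (Te u : Lp ℂ p (jacobiMeasure α β)) t * g t ∂(jacobiMeasure α β) =
      ∫ t, (u : Lp ℂ p (jacobiMeasure α β)) t * jacobiOp α β g t ∂(jacobiMeasure α β))

/-- A partially defined operator `T` on `X` has the single-valued extension property if for
every nonempty open `U ⊆ ℂ`, the only analytic `φ : U → X` with values in the domain of `T`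
such that `(T - z) φ z = 0` on `U` is the zero function. -/
def HasSVEP {X : Type*} [NormedAddCommGroup X] [NormedSpace ℂ X] (T : X →ₗ.[ℂ] X) : Prop :=
  ∀ U : Set ℂ, IsOpen U → U.Nonempty → ∀ φ : ℂ → X, AnalyticOnNhd ℂ φ U →
    (∀ z ∈ U, ∃ hz : φ z ∈ T.domain, T ⟨φ z, hz⟩ - z • φ z = 0) →
    ∀ z ∈ U, φ z = 0




lemma jacobiDensity_integrableOn {α β : ℝ} (hα : -1 < α) (hβ : -1 < β) :
    IntegrableOn (fun t : ℝ => (1 - t) ^ α * (1 + t) ^ β) (Set.Ioo (-1:ℝ) 1) volume := by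
  have key : ∀ s : Set ℝ, MeasurableSet s → s ⊆ Set.Ioo (-1:ℝ) 1 →
      ∀ g : ℝ → ℝ, IntegrableOn g s volume →
      (∀ t ∈ s, (1 - t) ^ α * (1 + t) ^ β ≤ g t) →
      IntegrableOn (fun t : ℝ => (1 - t) ^ α * (1 + t) ^ β) s volume := by
    intro s hs hsub g hg hbound
    have hcont : ContinuousOn (fun t : ℝ => (1 - t) ^ α * (1 + t) ^ β) s := by
      apply ContinuousOn.mul
      · refine (continuousOn_const.sub continuousOn_id).rpow_const (fun x hx => Or.inl ?_)
        have := (hsub hx).2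
        simp only [Pi.sub_apply, id_eq]
        intro h
        rw [sub_eq_zero] at h
        exact absurd h.symm (ne_of_lt this)
      · refine (continuousOn_const.add continuousOn_id).rpow_const (fun x hx => Or.inl ?_)
        have := (hsub hx).1
        simp only [Pi.add_apply, id_eq]
        intro h
        have : x = -1 := by linarith
        exact absurd this (ne_of_gt (hsub hx).1)
    refine Integrable.mono' hg (hcont.aestronglyMeasurable hs) ?_
    rw [ae_restrict_iff' hs]
    filter_upwards with t ht
    have h1 : (0:ℝ) < 1 - t := by linarith [(hsub ht).2]
    have h2 : (0:ℝ) < 1 + t := by linarith [(hsub ht).1]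
    rw [Real.norm_eq_abs, abs_of_nonneg (mul_nonneg (Real.rpow_nonneg h1.le _)
      (Real.rpow_nonneg h2.le _))]
    exact hbound t ht
  have hC : ∀ (γ : ℝ) (x : ℝ), 1 ≤ x → x ≤ 2 → x ^ γ ≤ max ((2:ℝ) ^ γ) 1 := by
    intro γ x hx1 hx2
    rcases le_or_gt 0 γ with h | h
    · exact le_max_of_le_left (Real.rpow_le_rpow (by linarith) hx2 h)
    · exact le_max_of_le_right (Real.rpow_le_one_of_one_le_of_nonpos hx1 h.le)
  have h1 : IntegrableOn (fun t : ℝ => (1 + t) ^ β) (Set.Ioc (-1:ℝ) 0) volume := by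
    have h : IntervalIntegrable (fun x : ℝ => x ^ β) volume 0 1 :=
      intervalIntegral.intervalIntegrable_rpow' hβ
    have h' := h.comp_add_right 1
    rw [show (0:ℝ) - 1 = -1 by norm_num, show (1:ℝ) - 1 = 0 by norm_num,
      intervalIntegrable_iff_integrableOn_Ioc_of_le (by norm_num)] at h'
    exact h'.congr_fun (fun t ht => by rw [add_comm]) measurableSet_Ioc
  have h2 : IntegrableOn (fun t : ℝ => (1 - t) ^ α) (Set.Ioo (0:ℝ) 1) volume := by
    have h : IntervalIntegrable (fun x : ℝ => x ^ α) volume 0 1 :=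
      intervalIntegral.intervalIntegrable_rpow' hα
    have h' := (h.comp_sub_left 1).symm
    rw [show (1:ℝ) - 0 = 1 by norm_num, show (1:ℝ) - 1 = 0 by norm_num,
      intervalIntegrable_iff_integrableOn_Ioc_of_le (by norm_num)] at h'
    exact h'.mono_set Set.Ioo_subset_Ioc_self
  have p1 : IntegrableOn (fun t : ℝ => (1 - t) ^ α * (1 + t) ^ β) (Set.Ioc (-1:ℝ) 0) volume := by
    refine key _ measurableSet_Ioc (fun t ht => ?_) _ (h1.const_mul (max ((2:ℝ) ^ α) 1)) ?_
    · exact ⟨ht.1, by linarith [ht.2]⟩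
    · intro t ht
      have hb : (1 - t) ^ α ≤ max ((2:ℝ) ^ α) 1 := hC α _ (by linarith [ht.2]) (by linarith [ht.1])
      exact mul_le_mul_of_nonneg_right hb (Real.rpow_nonneg (by linarith [ht.1]) _)
  have p2 : IntegrableOn (fun t : ℝ => (1 - t) ^ α * (1 + t) ^ β) (Set.Ioo (0:ℝ) 1) volume := by
    refine key _ measurableSet_Ioo (fun t ht => ?_) _ (h2.const_mul (max ((2:ℝ) ^ β) 1)) ?_
    · exact ⟨by linarith [ht.1], ht.2⟩
    · intro t ht
      have hb : (1 + t) ^ β ≤ max ((2:ℝ) ^ β) 1 := hC β _ (by linarith [ht.1]) (by linarith [ht.2])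
      calc (1 - t) ^ α * (1 + t) ^ β ≤ (1 - t) ^ α * max ((2:ℝ) ^ β) 1 :=
            mul_le_mul_of_nonneg_left hb (Real.rpow_nonneg (by linarith [ht.2]) _)
        _ = max ((2:ℝ) ^ β) 1 * (1 - t) ^ α := mul_comm _ _
  refine (p1.union p2).mono_set (fun t ht => ?_)
  rcases le_or_gt t 0 with h | h
  · exact Or.inl ⟨ht.1, h⟩
  · exact Or.inr ⟨h, ht.2⟩

lemma jacobiMeasure_finite {α β : ℝ} (hα : -1 < α) (hβ : -1 < β) :
    IsFiniteMeasure (jacobiMeasure α β) := by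
  constructor
  rw [jacobiMeasure, withDensity_apply _ MeasurableSet.univ, Measure.restrict_univ]
  have h := (jacobiDensity_integrableOn hα hβ).2
  rw [hasFiniteIntegral_iff_norm] at h
  refine lt_of_le_of_lt (lintegral_mono (fun t => ?_)) h
  exact ENNReal.ofReal_le_ofReal (le_abs_self _)



lemma smoothFn_pow (n : ℕ) : SmoothFn (fun t : ℝ => (t:ℂ) ^ n) := by
  intro m
  exact (Complex.ofRealCLM.contDiff.of_le le_top).pow n

lemma deriv_ofReal_pow (n : ℕ) :
    deriv (fun t : ℝ => (t:ℂ) ^ n) = fun t : ℝ => (n : ℂ) * (t:ℂ) ^ (n - 1) := by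
  funext t
  exact ((hasDerivAt_pow n ((t:ℝ):ℂ)).comp_ofReal).deriv

lemma deriv_const_mul_ofReal_pow (c : ℂ) (n : ℕ) :
    deriv (fun t : ℝ => c * (t:ℂ) ^ n) = fun t : ℝ => c * ((n : ℂ) * (t:ℂ) ^ (n - 1)) := by
  funext t
  exact (((hasDerivAt_pow n ((t:ℝ):ℂ)).const_mul c).comp_ofReal).deriv

lemma iteratedDeriv_pow_one (n : ℕ) :
    iteratedDeriv 1 (fun t : ℝ => (t:ℂ) ^ n) = fun t : ℝ => (n : ℂ) * (t:ℂ) ^ (n - 1) := by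
  rw [iteratedDeriv_one, deriv_ofReal_pow]

lemma iteratedDeriv_pow_two (n : ℕ) :
    iteratedDeriv 2 (fun t : ℝ => (t:ℂ) ^ n) =
      fun t : ℝ => (n : ℂ) * (((n:ℂ) - 1) * (t:ℂ) ^ (n - 1 - 1)) := by
  rw [show (2:ℕ) = 1 + 1 from rfl, iteratedDeriv_succ, iteratedDeriv_pow_one]
  rcases n with _ | m
  · funext t; simp
  · rw [deriv_const_mul_ofReal_pow]
    funext t
    simp [Nat.succ_sub_one]

lemma jacobiOp_pow_zero (α β : ℝ) : jacobiOp α β (fun t : ℝ => (t:ℂ) ^ 0) = fun _ => 0 := by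
  funext t
  simp only [jacobiOp, iteratedDeriv_pow_one, iteratedDeriv_pow_two]
  norm_num

lemma jacobiOp_pow_one (α β : ℝ) : jacobiOp α β (fun t : ℝ => (t:ℂ) ^ 1) =
    fun t : ℝ => ((β:ℂ) - (α:ℂ)) * (t:ℂ) ^ 0 - ((α:ℂ) + (β:ℂ) + 2) * (t:ℂ) ^ 1 := by
  funext t
  simp only [jacobiOp, iteratedDeriv_pow_one, iteratedDeriv_pow_two]
  push_cast
  ring

lemma jacobiOp_pow_succ (α β : ℝ) (k : ℕ) :
    jacobiOp α β (fun t : ℝ => (t:ℂ) ^ (k + 2)) = fun t : ℝ =>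
      ((k:ℂ) + 2) * ((k:ℂ) + 1) * (t:ℂ) ^ k + ((k:ℂ) + 2) * ((β:ℂ) - (α:ℂ)) * (t:ℂ) ^ (k + 1)
        - ((k:ℂ) + 2) * ((k:ℂ) + (α:ℂ) + (β:ℂ) + 3) * (t:ℂ) ^ (k + 2) := by
  funext t
  simp only [jacobiOp, iteratedDeriv_pow_one, iteratedDeriv_pow_two,
    show k + 2 - 1 - 1 = k by omega, show k + 2 - 1 = k + 1 by omega]
  push_cast
  ring

lemma integrable_mul_pow {μ : Measure ℝ} (hsupp : ∀ᵐ t ∂μ, t ∈ Set.Ioo (-1:ℝ) 1)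
    {u : ℝ → ℂ} (hu : Integrable u μ) (n : ℕ) :
    Integrable (fun t => u t * (t:ℂ) ^ n) μ := by
  have hb : ∀ᵐ t ∂μ, ‖((t:ℝ):ℂ) ^ n‖ ≤ 1 := by
    filter_upwards [hsupp] with t ht
    rw [norm_pow, Complex.norm_real]
    exact pow_le_one₀ (norm_nonneg _) (by rw [Real.norm_eq_abs, abs_le]; constructor <;>
      [linarith [ht.1]; linarith [ht.2]])
  have h := Integrable.bdd_mul (c := 1) hu
    ((Complex.continuous_ofReal.pow n).aestronglyMeasurable) hb
  have h2 : (fun t : ℝ => u t * (t:ℂ) ^ n) = fun t : ℝ => ((t:ℝ):ℂ) ^ n * u t :=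
    funext fun t => mul_comm _ _
  rw [h2]
  exact h

lemma ae_zero_of_moments {μ : Measure ℝ} [IsFiniteMeasure μ]
    (hsupp : ∀ᵐ t ∂μ, t ∈ Set.Ioo (-1:ℝ) 1) {u : ℝ → ℂ} (hu : Integrable u μ)
    (hm : ∀ n : ℕ, ∫ t, u t * (t:ℂ) ^ n ∂μ = 0) : ∀ᵐ t ∂μ, u t = 0 := by
  -- step 1: integrals against real polynomials vanish
  have hpoly : ∀ q : Polynomial ℝ, ∫ t, u t * ((q.eval t : ℝ) : ℂ) ∂μ = 0 := by
    intro q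
    have hexp : ∀ t : ℝ, u t * ((q.eval t : ℝ) : ℂ) =
        ∑ i ∈ Finset.range (q.natDegree + 1), (q.coeff i : ℂ) * (u t * (t:ℂ) ^ i) := by
      intro t
      rw [Polynomial.eval_eq_sum_range]
      push_cast
      rw [Finset.mul_sum]
      congr 1
      funext i
      ring
    simp_rw [hexp]
    rw [integral_finset_sum _ (fun i _ => ((integrable_mul_pow hsupp hu i).const_mul _))]
    simp [integral_const_mul, hm]
  -- step 2: integrals against compactly supported smooth functions vanish
  have hIcc : ∀ᵐ t ∂μ, t ∈ Set.Icc (-1:ℝ) 1 := hsupp.mono (fun t ht => ⟨ht.1.le, ht.2.le⟩)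
  have hMulInt : ∀ h : ℝ → ℝ, Continuous h → Integrable (fun t => h t • u t) μ := by
    intro h hh
    obtain ⟨C, hC⟩ := (isCompact_Icc (a := (-1:ℝ)) (b := 1)).exists_bound_of_continuousOn
      hh.continuousOn
    have : Integrable (fun t => ((h t : ℝ) : ℂ) * u t) μ := by
      refine Integrable.bdd_mul (c := C) hu
        ((Complex.continuous_ofReal.comp hh).aestronglyMeasurable) ?_
      filter_upwards [hIcc] with t ht
      rw [Complex.norm_real]
      exact hC t ht
    simpa [Complex.real_smul] using this
  have key : ∀ g : ℝ → ℝ, Continuous g → ∫ t, g t • u t ∂μ = 0 := by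
    intro g hg
    set G : C(Set.Icc (-1:ℝ) 1, ℝ) :=
      ContinuousMap.mk (fun x : Set.Icc (-1:ℝ) 1 => g x) (hg.comp continuous_subtype_val) with hGdef
    have hG : G ∈ closure ((polynomialFunctions (Set.Icc (-1:ℝ) 1)) :
        Set C(Set.Icc (-1:ℝ) 1, ℝ)) := by
      rw [← Subalgebra.topologicalClosure_coe, polynomialFunctions_closure_eq_top]
      exact Algebra.mem_top
    have hI : ∀ ε : ℝ, 0 < ε → ‖∫ t, g t • u t ∂μ‖ ≤ ε * ∫ t, ‖u t‖ ∂μ := by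
      intro ε hε
      obtain ⟨b, hb, hdist⟩ := Metric.mem_closure_iff.mp hG ε hε
      rw [polynomialFunctions_coe] at hb
      obtain ⟨q, rfl⟩ := hb
      have hq0 : ∫ t, (Polynomial.eval t q : ℝ) • u t ∂μ = 0 := by
        have := hpoly q
        simp_rw [Complex.real_smul]
        simpa [mul_comm] using this
      have hsplit : ∫ t, g t • u t ∂μ = ∫ t, (g t - Polynomial.eval t q) • u t ∂μ := by
        have heq : (fun t => (g t - Polynomial.eval t q) • u t) =
            fun t => g t • u t - (Polynomial.eval t q) • u t :=
          funext fun t => sub_smul _ _ _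
        rw [heq, integral_sub (hMulInt g hg) (hMulInt _ q.continuous), hq0, sub_zero]
      rw [hsplit]
      refine (norm_integral_le_integral_norm _).trans ?_
      rw [← integral_const_mul]
      refine integral_mono_of_nonneg (ae_of_all _ fun t => norm_nonneg _)
        (hu.norm.const_mul ε) ?_
      filter_upwards [hIcc] with t ht
      rw [norm_smul]
      have hd : dist (G ⟨t, ht⟩) ((Polynomial.toContinuousMapOnAlgHom _ q) ⟨t, ht⟩) ≤
          dist G (Polynomial.toContinuousMapOnAlgHom _ q) := ContinuousMap.dist_apply_le_dist _
      have hlt : ‖g t - Polynomial.eval t q‖ ≤ ε := by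
        have : dist (G ⟨t, ht⟩) ((Polynomial.toContinuousMapOnAlgHom _ q) ⟨t, ht⟩) =
            ‖g t - Polynomial.eval t q‖ := by
          simp [hGdef, Polynomial.toContinuousMapOnAlgHom, Polynomial.toContinuousMapOn,
            Polynomial.toContinuousMap, Real.dist_eq, Real.norm_eq_abs]
        rw [this] at hd
        exact hd.trans hdist.le
      exact mul_le_mul_of_nonneg_right hlt (norm_nonneg _)
    by_contra hne
    have hC0nn : 0 ≤ ∫ t, ‖u t‖ ∂μ := integral_nonneg fun t => norm_nonneg _
    have hpos : 0 < ‖∫ t, g t • u t ∂μ‖ := norm_pos_iff.mpr hne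
    obtain ⟨C0, hC0nn', hI', hpos'⟩ :
        ∃ C0 : ℝ, 0 ≤ C0 ∧ (∀ ε : ℝ, 0 < ε → ‖∫ t, g t • u t ∂μ‖ ≤ ε * C0) ∧
          0 < ‖∫ t, g t • u t ∂μ‖ := ⟨_, hC0nn, hI, hpos⟩
    generalize hN : ‖∫ t, g t • u t ∂μ‖ = N at hI' hpos'
    have h2 : (0:ℝ) < 2 * (C0 + 1) := by positivity
    have hfin := hI' (N / (2 * (C0 + 1))) (by positivity)
    rw [div_mul_eq_mul_div, le_div_iff₀ h2] at hfin
    nlinarith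
  refine ae_eq_zero_of_integral_contDiff_smul_eq_zero hu.locallyIntegrable ?_
  exact fun g hg _ => key g hg.continuous

lemma jacobi_ae_mem (α β : ℝ) : ∀ᵐ t ∂(jacobiMeasure α β), t ∈ Set.Ioo (-1:ℝ) 1 :=
  (withDensity_absolutelyContinuous _ _).ae_le (ae_restrict_mem measurableSet_Ioo)

/-- Let `1 ≤ p ≤ ∞` and `α, β ≥ -1/2`. Let `T_{(α,β)}` be the Jacobi operator with domain
`C^∞[-1,1]`, viewed as an operator on `L^p([-1,1], w_{(α,β)} dt)`, and let `T_e` be any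
admissible extension of `T_{(α,β)}`. Then `T_e` has the single-valued extension property. -/
theorem stmt11 (α β : ℝ) (hα : -(1/2 : ℝ) ≤ α) (hβ : -(1/2 : ℝ) ≤ β)
    (p : ℝ≥0∞) [Fact (1 ≤ p)]
    (Te : Lp ℂ p (jacobiMeasure α β) →ₗ.[ℂ] Lp ℂ p (jacobiMeasure α β))
    (hTe : IsAdmissibleJacobiExt α β p Te) :
    HasSVEP Te := by
  have hα1 : (-1:ℝ) < α := by linarith
  have hβ1 : (-1:ℝ) < β := by linarith
  haveI : IsFiniteMeasure (jacobiMeasure α β) := jacobiMeasure_finite hα1 hβ1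
  intro U hU _hUne φ hφ hker
  set S : Set ℂ := Set.range (fun n : ℕ => -((n : ℂ) * ((n:ℂ) + (α:ℂ) + (β:ℂ) + 1))) with hSdef
  have hScount : S.Countable := Set.countable_range _
  have hsupp := jacobi_ae_mem α β
  have hzero : ∀ z ∈ U, z ∉ S → φ z = 0 := by
    intro z hzU hzS
    obtain ⟨hz, hker'⟩ := hker z hzU
    have hTz : Te ⟨φ z, hz⟩ = z • φ z := sub_eq_zero.mp hker'
    set u := φ z with hu
    have huI : Integrable (⇑u) (jacobiMeasure α β) :=
      memLp_one_iff_integrable.mp ((Lp.memLp u).mono_exponent Fact.out)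
    have hint := fun n => integrable_mul_pow hsupp huI n
    set m : ℕ → ℂ := fun n => ∫ t, u t * (t:ℂ) ^ n ∂(jacobiMeasure α β) with hm
    have hkey : ∀ g : ℝ → ℂ, SmoothFn g →
        z * ∫ t, u t * g t ∂(jacobiMeasure α β) =
          ∫ t, u t * jacobiOp α β g t ∂(jacobiMeasure α β) := by
      intro g hg
      have h2 := hTe.2 ⟨u, hz⟩ g hg
      simp only at h2
      rw [hTz] at h2
      rw [← h2, ← integral_const_mul]
      refine integral_congr_ae ?_
      filter_upwards [Lp.coeFn_smul z u] with t ht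
      rw [ht]
      simp [smul_eq_mul, mul_assoc]
    have hmz : ∀ n, m n = 0 := by
      have h0 : z * m 0 = 0 := by
        have h := hkey _ (smoothFn_pow 0)
        rw [jacobiOp_pow_zero] at h
        have hrfl : m 0 = ∫ t, u t * (t:ℂ)^0 ∂(jacobiMeasure α β) := rfl
        rw [hrfl, h]
        simp
      have h1 : z * m 1 = ((β:ℂ) - α) * m 0 - ((α:ℂ) + β + 2) * m 1 := by
        have h := hkey _ (smoothFn_pow 1)
        rw [jacobiOp_pow_one] at h
        rw [h]
        have heq : (fun t : ℝ => u t * (((β:ℂ) - α) * (t:ℂ)^0 - ((α:ℂ)+β+2) * (t:ℂ)^1)) =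
            fun t : ℝ => ((β:ℂ) - α) * (u t * (t:ℂ)^0) - ((α:ℂ)+β+2) * (u t * (t:ℂ)^1) :=
          funext fun t => by ring
        rw [heq, integral_sub ((hint 0).const_mul _) ((hint 1).const_mul _),
          integral_const_mul, integral_const_mul]
      have hsucc : ∀ k : ℕ, z * m (k+2) =
          ((k:ℂ)+2)*((k:ℂ)+1) * m k + ((k:ℂ)+2)*((β:ℂ)-α) * m (k+1)
            - ((k:ℂ)+2)*((k:ℂ)+α+β+3) * m (k+2) := by
        intro k
        have h := hkey _ (smoothFn_pow (k+2))
        rw [jacobiOp_pow_succ] at h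
        rw [h]
        have heq : (fun t : ℝ => u t * (((k:ℂ)+2)*((k:ℂ)+1) * (t:ℂ)^k
              + ((k:ℂ)+2)*((β:ℂ)-(α:ℂ)) * (t:ℂ)^(k+1)
              - ((k:ℂ)+2)*((k:ℂ)+(α:ℂ)+(β:ℂ)+3) * (t:ℂ)^(k+2))) =
            fun t : ℝ => (((k:ℂ)+2)*((k:ℂ)+1) * (u t * (t:ℂ)^k)
              + ((k:ℂ)+2)*((β:ℂ)-(α:ℂ)) * (u t * (t:ℂ)^(k+1)))
              - ((k:ℂ)+2)*((k:ℂ)+(α:ℂ)+(β:ℂ)+3) * (u t * (t:ℂ)^(k+2)) :=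
          funext fun t => by ring
        have hA : Integrable (fun t : ℝ => ((k:ℂ)+2)*((k:ℂ)+1) * (u t * (t:ℂ)^k)
            + ((k:ℂ)+2)*((β:ℂ)-(α:ℂ)) * (u t * (t:ℂ)^(k+1))) (jacobiMeasure α β) :=
          ((hint k).const_mul _).add ((hint (k+1)).const_mul _)
        rw [heq, integral_sub hA ((hint (k+2)).const_mul _),
          integral_add ((hint k).const_mul _) ((hint (k+1)).const_mul _),
          integral_const_mul, integral_const_mul, integral_const_mul]
      have hnotS : ∀ n : ℕ, z ≠ -((n : ℂ) * ((n:ℂ) + (α:ℂ) + (β:ℂ) + 1)) := by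
        intro n h
        exact hzS ⟨n, h.symm⟩
      intro n
      induction n using Nat.strong_induction_on with
      | _ n ih =>
        match n, ih with
        | 0, _ =>
          have hz0 : z ≠ 0 := by simpa using hnotS 0
          exact (mul_eq_zero.mp h0).resolve_left hz0
        | 1, ih =>
          have hm0 : m 0 = 0 := ih 0 (by omega)
          have : (z + ((α:ℂ) + β + 2)) * m 1 = 0 := by
            rw [add_mul, h1, hm0]
            ring
          refine (mul_eq_zero.mp this).resolve_left ?_
          intro h
          have hne := hnotS 1
          apply hne
          have : z = -((α:ℂ) + β + 2) := by linear_combination h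
          rw [this]
          push_cast
          ring
        | (k+2), ih =>
          have hmk : m k = 0 := ih k (by omega)
          have hmk1 : m (k+1) = 0 := ih (k+1) (by omega)
          have : (z + ((k:ℂ)+2)*((k:ℂ)+α+β+3)) * m (k+2) = 0 := by
            rw [add_mul, hsucc k, hmk, hmk1]
            ring
          refine (mul_eq_zero.mp this).resolve_left ?_
          intro h
          apply hnotS (k+2)
          have : z = -(((k:ℂ)+2)*((k:ℂ)+α+β+3)) := by linear_combination h
          rw [this]
          push_cast
          ring
    have hae : ∀ᵐ t ∂(jacobiMeasure α β), u t = 0 := ae_zero_of_moments hsupp huI hmz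
    exact Lp.eq_zero_iff_ae_eq_zero.mpr hae
  intro z hzU
  have hcl : z ∈ closure (U \ S) := by
    rw [Metric.mem_closure_iff]
    intro ε hε
    obtain ⟨r, hr, hball⟩ := Metric.isOpen_iff.mp hU z hzU
    set δ : ℝ := min ε r / 2 with hδ
    have hδpos : 0 < δ := by
      have := lt_min hε hr
      positivity
    have hinj : Function.Injective (fun t : ℝ => z + (t:ℂ)) := by
      intro a b hab
      simp only [add_right_inj] at hab
      exact_mod_cast hab
    have hns : ¬ (Set.Ioo (0:ℝ) δ ⊆ (fun t : ℝ => z + (t:ℂ)) ⁻¹' S) := by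
      intro hsub
      have hc : (Set.Ioo (0:ℝ) δ).Countable :=
        Set.Countable.mono hsub (hScount.preimage hinj)
      have hvol := hc.measure_zero (volume : Measure ℝ)
      rw [Real.volume_Ioo] at hvol
      simp only [ENNReal.ofReal_eq_zero, sub_zero] at hvol
      linarith
    obtain ⟨t, ht, hnot⟩ := Set.not_subset.mp hns
    have htd : dist (z + (t:ℂ)) z = t := by
      rw [Complex.dist_eq]
      simp only [add_sub_cancel_left]
      rw [Complex.norm_real, Real.norm_eq_abs, abs_of_pos ht.1]
    refine ⟨z + (t:ℂ), ⟨hball ?_, hnot⟩, ?_⟩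
    · rw [Metric.mem_ball, htd]
      calc t < δ := ht.2
        _ ≤ min ε r := by rw [hδ]; linarith [lt_min hε hr]
        _ ≤ r := min_le_right _ _
    · rw [dist_comm, htd]
      calc t < δ := ht.2
        _ ≤ min ε r := by rw [hδ]; linarith [lt_min hε hr]
        _ ≤ ε := min_le_left _ _
  haveI : (𝓝[U \ S] z).NeBot := mem_closure_iff_nhdsWithin_neBot.mp hcl
  have h1 : Tendsto φ (𝓝[U \ S] z) (𝓝 (φ z)) :=
    ((hφ z hzU).continuousAt).continuousWithinAt
  have h2 : Tendsto φ (𝓝[U \ S] z) (𝓝 0) := by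
    refine Tendsto.congr' ?_ tendsto_const_nhds
    filter_upwards [self_mem_nhdsWithin] with w hw
    exact (hzero w hw.1 hw.2).symm
  exact tendsto_nhds_unique h1 h2
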